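/- The hold-out penalty decomposes as pen_HO(m,T,x) = 2x(1−τ)² [ ‖ŝ_m^{(T)} − s_m‖² + ‖ŝ_m^{(T^c)} − s_m‖² − 2(P_n^{(T)} − P)(ŝ_m^{(T^c)} − s_m) ], and consequently E[pen_HO(m,T,x)] = 2x·((1−τ)/τ)·D_m/n, where τ = |T|/n and D_m = PΨ_m − ‖s_m‖². -/

import Mathlib

open Finset MeasureTheory

/-- Empirical mean of `f` over the sample points indexed by `A`. -/
noncomputable def emp {X : Type*} {n : ℕ} (ξ : Fin n → X) (A : Finset (Fin n))
    (f : X → ℝ) : ℝ :=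
  (A.card : ℝ)⁻¹ * ∑ i ∈ A, f (ξ i)

lemma pair_key {X : Type*} [MeasurableSpace X] (P : Measure X) [IsProbabilityMeasure P]
    {n : ℕ} {f : X → ℝ} (hf : MemLp f 2 P) (i j : Fin n) :
    Integrable (fun ω : Fin n → X => f (ω i) * f (ω j)) (Measure.pi fun _ => P) ∧
    ∫ ω, f (ω i) * f (ω j) ∂(Measure.pi fun _ => P)
      = if i = j then ∫ y, (f y) ^ 2 ∂P else (∫ y, f y ∂P) ^ 2 := by
  letI : MeasureSpace X := ⟨P⟩
  haveI : SigmaFinite (volume : Measure X) := inferInstanceAs (SigmaFinite P)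
  have hμ : (Measure.pi fun _ : Fin n => P) = (volume : Measure (Fin n → X)) :=
    (MeasureTheory.volume_pi).symm
  have hfi : Integrable f P := hf.integrable one_le_two
  by_cases hij : i = j
  · subst hij
    set h : Fin n → X → ℝ := fun k => if k = i then (fun y => f y * f y) else (fun _ => 1) with hh
    have hprod : ∀ ω : Fin n → X, (∏ k, h k (ω k)) = f (ω i) * f (ω i) := by
      intro ω
      rw [Finset.prod_eq_single i (fun b _ hb => by simp [hh, hb]) (by simp)]
      simp [hh]
    have hint : ∀ k, Integrable (h k) (volume : Measure X) := by
      intro k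
      by_cases hk : k = i
      · have : Integrable (fun y => f y * f y) P := by
          simpa [sq] using hf.integrable_sq
        simp only [hh, hk, if_true]
        exact this
      · simpa [hh, hk] using (integrable_const (1 : ℝ) (μ := P))
    constructor
    · rw [hμ]
      exact (Integrable.fintype_prod hint).congr
        (Filter.Eventually.of_forall fun ω => hprod ω)
    · rw [hμ]
      rw [show (fun ω : Fin n → X => f (ω i) * f (ω i))
          = fun ω : Fin n → X => ∏ k, h k (ω k) from funext fun ω => (hprod ω).symm]
      rw [MeasureTheory.volume_pi, MeasureTheory.integral_fintype_prod_eq_prod h]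
      rw [Finset.prod_eq_single i (fun b _ hb => by simp [hh, hb]) (by simp)]
      simp only [hh, if_pos rfl, ← sq]
      rfl
  · set h : Fin n → X → ℝ := fun k => if k = i then f else if k = j then f else (fun _ => 1)
      with hh
    have hprod : ∀ ω : Fin n → X, (∏ k, h k (ω k)) = f (ω i) * f (ω j) := by
      intro ω
      have h1 : (∏ k, h k (ω k)) = ∏ k ∈ ({i, j} : Finset (Fin n)), h k (ω k) := by
        refine (Finset.prod_subset (Finset.subset_univ _) ?_).symm
        intro k _ hk
        simp only [Finset.mem_insert, Finset.mem_singleton, not_or] at hk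
        simp [hh, hk.1, hk.2]
      rw [h1, Finset.prod_pair hij]
      simp [hh, hij]
    have hint : ∀ k, Integrable (h k) (volume : Measure X) := by
      intro k
      by_cases hk : k = i
      · simp only [hh, hk, ↓reduceIte]
        exact hfi
      · by_cases hk' : k = j
        · simp only [hh, hk, hk', ↓reduceIte, ite_self]
          exact hfi
        · simpa [hh, hk, hk'] using (integrable_const (1 : ℝ) (μ := P))
    constructor
    · rw [hμ]
      exact (Integrable.fintype_prod hint).congr
        (Filter.Eventually.of_forall fun ω => hprod ω)
    · rw [hμ]
      rw [show (fun ω : Fin n → X => f (ω i) * f (ω j))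
          = fun ω : Fin n → X => ∏ k, h k (ω k) from funext fun ω => (hprod ω).symm]
      rw [MeasureTheory.volume_pi, MeasureTheory.integral_fintype_prod_eq_prod h]
      have h1 : (∏ k, ∫ y, h k y) = ∏ k ∈ ({i, j} : Finset (Fin n)), ∫ y, h k y := by
        refine (Finset.prod_subset (Finset.subset_univ _) ?_).symm
        intro k _ hk
        simp only [Finset.mem_insert, Finset.mem_singleton, not_or] at hk
        simp [hh, hk.1, hk.2]
      rw [h1, Finset.prod_pair hij]
      have hji : (j = i) = False := by simp [Ne.symm hij]
      simp only [hh, if_pos rfl, hij, hji, if_false, if_true, eq_self_iff_true, sq]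
      rfl

/-- Decomposition of the hold-out penalty
`pen_HO(m,T,x) = 2x(1−τ)² [‖ŝ_m^{(T)} − s_m‖² + ‖ŝ_m^{(T^c)} − s_m‖²
  − 2(P_n^{(T)} − P)(ŝ_m^{(T^c)} − s_m)]`
and its expectation `E[pen_HO(m,T,x)] = 2x ((1−τ)/τ) D_m / n`. -/
theorem stmt16 {X : Type*} [MeasurableSpace X] (P : Measure X) [IsProbabilityMeasure P]
    {n : ℕ} (hn : 0 < n)
    {Λ : Type*} [Fintype Λ] (ψ : Λ → X → ℝ)
    (hψ : ∀ l, MemLp (ψ l) 2 P)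
    (T : Finset (Fin n)) (hT0 : 0 < T.card) (hTn : T.card < n) (x : ℝ) :
    let μn : Measure (Fin n → X) := Measure.pi fun _ => P
    let τ : ℝ := (T.card : ℝ) / n
    let c : Λ → ℝ := fun l => ∫ y, ψ l y ∂P
    let Dm : ℝ := (∑ l, ∫ y, (ψ l y) ^ 2 ∂P) - ∑ l, (c l) ^ 2
    let penHO : (Fin n → X) → ℝ := fun ξ =>
      2 * x * ∑ l, (emp ξ T (ψ l) - emp ξ Finset.univ (ψ l)) ^ 2
    (∀ ξ : Fin n → X,
      penHO ξ = 2 * x * (1 - τ) ^ 2 *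
        ((∑ l, (emp ξ T (ψ l) - c l) ^ 2) + (∑ l, (emp ξ Tᶜ (ψ l) - c l) ^ 2)
          - 2 * ∑ l, (emp ξ T (ψ l) - c l) * (emp ξ Tᶜ (ψ l) - c l))) ∧
    (∫ ω, penHO ω ∂μn) = 2 * x * ((1 - τ) / τ) * Dm / n := by
  intro μn τ c Dm penHO
  have hμn : μn = Measure.pi fun _ => P := rfl
  have hpenHO : ∀ ξ : Fin n → X,
      penHO ξ = 2 * x * ∑ l, (emp ξ T (ψ l) - emp ξ Finset.univ (ψ l)) ^ 2 := fun _ => rfl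
  have hn0 : (n : ℝ) ≠ 0 := Nat.cast_ne_zero.mpr hn.ne'
  have ht0 : ((T.card : ℕ) : ℝ) ≠ 0 := Nat.cast_ne_zero.mpr hT0.ne'
  set t : ℝ := (T.card : ℝ) with htdef
  set tc : ℝ := ((Tᶜ : Finset (Fin n)).card : ℝ) with htcdef
  have hcR : tc = (n : ℝ) - t := by
    rw [htcdef, htdef, Finset.card_compl, Fintype.card_fin, Nat.cast_sub hTn.le]
  have htc0 : tc ≠ 0 := by
    rw [hcR]
    have : t < (n : ℝ) := by rw [htdef]; exact_mod_cast hTn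
    linarith
  have hτ : τ = t / n := rfl
  set a : Fin n → ℝ := fun i => if i ∈ T then t⁻¹ else -tc⁻¹ with ha
  have hdiff : ∀ (f : X → ℝ) (ξ : Fin n → X),
      emp ξ T f - emp ξ Tᶜ f = ∑ i, a i * f (ξ i) := by
    intro f ξ
    rw [← Finset.sum_add_sum_compl T (fun i => a i * f (ξ i))]
    have h1 : ∑ i ∈ T, a i * f (ξ i) = t⁻¹ * ∑ i ∈ T, f (ξ i) := by
      rw [Finset.mul_sum]
      exact Finset.sum_congr rfl fun i hi => by simp [ha, hi]
    have h2 : ∑ i ∈ Tᶜ, a i * f (ξ i) = -tc⁻¹ * ∑ i ∈ Tᶜ, f (ξ i) := by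
      rw [Finset.mul_sum]
      refine Finset.sum_congr rfl fun i hi => ?_
      have hi' : i ∉ T := Finset.mem_compl.mp hi
      simp [ha, hi']
    rw [h1, h2]
    simp only [emp]
    ring
  have hU : ∀ (f : X → ℝ) (ξ : Fin n → X),
      emp ξ T f - emp ξ Finset.univ f = (1 - τ) * (emp ξ T f - emp ξ Tᶜ f) := by
    intro f ξ
    have hsplit : ∑ i, f (ξ i) = ∑ i ∈ T, f (ξ i) + ∑ i ∈ Tᶜ, f (ξ i) :=
      (Finset.sum_add_sum_compl T _).symm
    have hnt : (n : ℝ) - t ≠ 0 := by rw [← hcR]; exact htc0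
    simp only [emp, Finset.card_univ, Fintype.card_fin, hsplit, hτ]
    rw [← htcdef, ← htdef, hcR]
    field_simp
    ring
  constructor
  · intro ξ
    have key : ∀ l, (emp ξ T (ψ l) - emp ξ Finset.univ (ψ l)) ^ 2
        = (1 - τ) ^ 2 * ((emp ξ T (ψ l) - c l) ^ 2 + (emp ξ Tᶜ (ψ l) - c l) ^ 2
            - 2 * ((emp ξ T (ψ l) - c l) * (emp ξ Tᶜ (ψ l) - c l))) := by
      intro l
      rw [hU (ψ l) ξ]
      ring
    rw [hpenHO ξ, Finset.sum_congr rfl fun l _ => key l]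
    simp only [Finset.sum_sub_distrib, Finset.sum_add_distrib, ← Finset.mul_sum]
    ring
  · have hsum0 : ∑ i, a i = 0 := by
      rw [← Finset.sum_add_sum_compl T a]
      have h1 : ∑ i ∈ T, a i = 1 := by
        have h : ∀ i ∈ T, a i = t⁻¹ := fun i hi => by simp [ha, hi]
        rw [Finset.sum_congr rfl h, Finset.sum_const, nsmul_eq_mul, ← htdef,
          mul_inv_cancel₀ ht0]
      have h2 : ∑ i ∈ Tᶜ, a i = -1 := by
        have h : ∀ i ∈ Tᶜ, a i = -tc⁻¹ := fun i hi => by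
          simp [ha, Finset.mem_compl.mp hi]
        rw [Finset.sum_congr rfl h, Finset.sum_const, nsmul_eq_mul, ← htcdef, mul_neg,
          mul_inv_cancel₀ htc0]
      rw [h1, h2]; ring
    have hsum2 : ∑ i, a i * a i = t⁻¹ + tc⁻¹ := by
      rw [← Finset.sum_add_sum_compl T (fun i => a i * a i)]
      have h1 : ∑ i ∈ T, a i * a i = t⁻¹ := by
        have h : ∀ i ∈ T, a i * a i = t⁻¹ * t⁻¹ := fun i hi => by simp [ha, hi]
        rw [Finset.sum_congr rfl h, Finset.sum_const, nsmul_eq_mul, ← htdef]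
        field_simp
      have h2 : ∑ i ∈ Tᶜ, a i * a i = tc⁻¹ := by
        have h : ∀ i ∈ Tᶜ, a i * a i = tc⁻¹ * tc⁻¹ := fun i hi => by
          simp [ha, Finset.mem_compl.mp hi]
        rw [Finset.sum_congr rfl h, Finset.sum_const, nsmul_eq_mul, ← htcdef]
        field_simp
      rw [h1, h2]
    have hpairs : ∀ M2 C : ℝ, (∑ i, ∑ j, a i * a j * (if i = j then M2 else C))
        = (t⁻¹ + tc⁻¹) * (M2 - C) := by
      intro M2 C
      have step : ∀ i j : Fin n, a i * a j * (if i = j then M2 else C)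
          = a i * (a j * C) + (if j = i then a i * a i * (M2 - C) else 0) := by
        intro i j
        by_cases h : i = j
        · subst h; simp; ring
        · rw [if_neg h, if_neg (Ne.symm h), add_zero]; ring
      simp_rw [step, Finset.sum_add_distrib, Finset.sum_ite_eq' Finset.univ,
        Finset.mem_univ, if_true, ← Finset.mul_sum, ← Finset.sum_mul]
      rw [hsum0, hsum2]
      ring
    have hpen : ∀ ω : Fin n → X, penHO ω
        = (2 * x * (1 - τ) ^ 2) * ∑ l, ∑ i, ∑ j, a i * a j * (ψ l (ω i) * ψ l (ω j)) := by
      intro ω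
      rw [hpenHO ω]
      have key : ∀ l, (emp ω T (ψ l) - emp ω Finset.univ (ψ l)) ^ 2
          = (1 - τ) ^ 2 * ∑ i, ∑ j, a i * a j * (ψ l (ω i) * ψ l (ω j)) := by
        intro l
        rw [hU (ψ l) ω, hdiff (ψ l) ω, mul_pow, pow_two (∑ i, a i * ψ l (ω i)),
          Finset.sum_mul_sum]
        congr 1
        exact Finset.sum_congr rfl fun i _ => Finset.sum_congr rfl fun j _ => by ring
      rw [Finset.sum_congr rfl fun l _ => key l, ← Finset.mul_sum]
      ring
    have hInt : ∀ (l : Λ) (i j : Fin n),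
        Integrable (fun ω : Fin n → X => ψ l (ω i) * ψ l (ω j)) μn := by
      rw [hμn]; exact fun l i j => (pair_key P (hψ l) i j).1
    have hI : ∀ (l : Λ) (i j : Fin n),
        ∫ ω, ψ l (ω i) * ψ l (ω j) ∂μn
          = if i = j then ∫ y, (ψ l y) ^ 2 ∂P else (c l) ^ 2 := by
      rw [hμn]; exact fun l i j => (pair_key P (hψ l) i j).2
    have hnt : (n : ℝ) - t ≠ 0 := by rw [← hcR]; exact htc0
    calc ∫ ω, penHO ω ∂μn
        = ∫ ω, (2 * x * (1 - τ) ^ 2)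
            * ∑ l, ∑ i, ∑ j, a i * a j * (ψ l (ω i) * ψ l (ω j)) ∂μn :=
          integral_congr_ae (Filter.Eventually.of_forall hpen)
      _ = (2 * x * (1 - τ) ^ 2)
            * ∫ ω, ∑ l, ∑ i, ∑ j, a i * a j * (ψ l (ω i) * ψ l (ω j)) ∂μn :=
          integral_const_mul _ _
      _ = (2 * x * (1 - τ) ^ 2)
            * ∑ l, ∑ i, ∑ j, a i * a j * ∫ ω, ψ l (ω i) * ψ l (ω j) ∂μn := by
          rw [integral_finset_sum _ (fun l _ => integrable_finset_sum _
            (fun i _ => integrable_finset_sum _ (fun j _ => (hInt l i j).const_mul _)))]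
          congr 1
          refine Finset.sum_congr rfl fun l _ => ?_
          rw [integral_finset_sum _ (fun i _ => integrable_finset_sum _
            (fun j _ => (hInt l i j).const_mul _))]
          refine Finset.sum_congr rfl fun i _ => ?_
          rw [integral_finset_sum _ (fun j _ => (hInt l i j).const_mul _)]
          exact Finset.sum_congr rfl fun j _ => integral_const_mul _ _
      _ = (2 * x * (1 - τ) ^ 2)
            * ∑ l, ((t⁻¹ + tc⁻¹) * ((∫ y, (ψ l y) ^ 2 ∂P) - (c l) ^ 2)) := by
          congr 1
          refine Finset.sum_congr rfl fun l _ => ?_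
          simp_rw [hI l]
          exact hpairs _ _
      _ = 2 * x * ((1 - τ) / τ) * Dm / n := by
          rw [← Finset.mul_sum, Finset.sum_sub_distrib]
          show _ = 2 * x * ((1 - τ) / τ)
            * ((∑ l, ∫ y, (ψ l y) ^ 2 ∂P) - ∑ l, (c l) ^ 2) / n
          rw [hτ, hcR]
          field_simp
          ring
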